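/- For any centered Gaussian random variable Y on the real line, any real number r, and any ε > 0, the probability P(|Y + r| ≤ ε) is at most P(|Y| ≤ ε). -/
import Mathlib


open MeasureTheory ProbabilityTheory

lemma anderson_pdf_even (v : NNReal) (x : ℝ) :
    gaussianPDFReal 0 v (-x) = gaussianPDFReal 0 v x := by
  simp [gaussianPDFReal, neg_sq]

lemma anderson_pdf_anti (v : NNReal) {a b : ℝ} (h : |a| ≤ |b|) :
    gaussianPDFReal 0 v b ≤ gaussianPDFReal 0 v a := by
  by_cases hv : v = 0
  · simp [hv]
  · unfold gaussianPDFReal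
    have h2v : (0:ℝ) < 2 * v := by positivity
    have hab : (a - 0)^2 ≤ (b - 0)^2 := by
      simp only [sub_zero]
      calc a ^ 2 = |a| ^ 2 := (sq_abs a).symm
        _ ≤ |b| ^ 2 := by gcongr
        _ = b ^ 2 := sq_abs b
    have hexp : -(b - 0)^2 / (2 * ↑v) ≤ -(a - 0)^2 / (2 * ↑v) :=
      (div_le_div_iff_of_pos_right h2v).mpr (neg_le_neg hab)
    exact mul_le_mul_of_nonneg_left (Real.exp_le_exp.mpr hexp) (by positivity)

lemma anderson_set_Icc (r ε : ℝ) : {x : ℝ | |x + r| ≤ ε} = Set.Icc (-ε - r) (ε - r) := by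
  ext x
  simp only [Set.mem_setOf_eq, Set.mem_Icc, abs_le]
  constructor <;> rintro ⟨h1, h2⟩ <;> exact ⟨by linarith, by linarith⟩

lemma anderson_key (v : NNReal) {ε s : ℝ} (hε : 0 < ε) (hs : 0 ≤ s) :
    ∫ x in (-ε - s)..(ε - s), gaussianPDFReal 0 v x
      ≤ ∫ x in (-ε)..ε, gaussianPDFReal 0 v x := by
  have hint : Integrable (gaussianPDFReal 0 v) := integrable_gaussianPDFReal 0 v
  by_cases hcase : s ≤ 2 * ε
  · have h1 : ∫ x in (-ε - s)..(ε - s), gaussianPDFReal 0 v x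
        = (∫ x in (-ε - s)..(-ε), gaussianPDFReal 0 v x)
          + ∫ x in (-ε)..(ε - s), gaussianPDFReal 0 v x := by
      rw [intervalIntegral.integral_add_adjacent_intervals] <;>
        exact hint.intervalIntegrable
    have h2 : ∫ x in (-ε)..ε, gaussianPDFReal 0 v x
        = (∫ x in (-ε)..(ε - s), gaussianPDFReal 0 v x)
          + ∫ x in (ε - s)..ε, gaussianPDFReal 0 v x := by
      rw [intervalIntegral.integral_add_adjacent_intervals] <;>
        exact hint.intervalIntegrable
    have h3 : (∫ x in (-ε - s)..(-ε), gaussianPDFReal 0 v x)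
        = ∫ x in ε..(ε + s), gaussianPDFReal 0 v x := by
      calc (∫ x in (-ε - s)..(-ε), gaussianPDFReal 0 v x)
          = ∫ x in -(ε + s)..(-ε), gaussianPDFReal 0 v x := by ring_nf
        _ = ∫ x in ε..(ε + s), gaussianPDFReal 0 v (-x) :=
            (intervalIntegral.integral_comp_neg _).symm
        _ = ∫ x in ε..(ε + s), gaussianPDFReal 0 v x := by
            simp only [anderson_pdf_even]
    have h4 : (∫ x in (ε - s)..ε, gaussianPDFReal 0 v x)
        = ∫ x in ε..(ε + s), gaussianPDFReal 0 v (x - s) := by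
      rw [intervalIntegral.integral_comp_sub_right]
      ring_nf
    have h5 : (∫ x in ε..(ε + s), gaussianPDFReal 0 v x)
        ≤ ∫ x in ε..(ε + s), gaussianPDFReal 0 v (x - s) := by
      apply intervalIntegral.integral_mono_on (by linarith)
        hint.intervalIntegrable (hint.comp_sub_right s).intervalIntegrable
      intro x hx
      obtain ⟨hx1, hx2⟩ := hx
      apply anderson_pdf_anti
      rw [abs_of_pos (lt_of_lt_of_le hε hx1)]
      exact abs_le.mpr ⟨by linarith, by linarith⟩
    rw [h1, h2]
    have := h3 ▸ h4 ▸ h5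
    linarith
  · have h5 : ∫ x in (-ε)..ε, gaussianPDFReal 0 v x
        = ∫ x in (-ε - s)..(ε - s), gaussianPDFReal 0 v (x + s) := by
      rw [intervalIntegral.integral_comp_add_right]
      ring_nf
    rw [h5]
    apply intervalIntegral.integral_mono_on (by linarith)
      hint.intervalIntegrable (hint.comp_add_right s).intervalIntegrable
    intro x hx
    obtain ⟨hx1, hx2⟩ := hx
    apply anderson_pdf_anti
    rw [abs_of_neg (show x < 0 by linarith)]
    exact abs_le.mpr ⟨by linarith, by linarith⟩

lemma anderson_gmain (v : NNReal) {ε : ℝ} (hε : 0 < ε) {s : ℝ} (hs : 0 ≤ s) :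
    gaussianReal 0 v {x | |x + s| ≤ ε} ≤ gaussianReal 0 v {x | |x| ≤ ε} := by
  have hset1 := anderson_set_Icc s ε
  have hset2 : {x : ℝ | |x| ≤ ε} = Set.Icc (-ε) ε := by
    have := anderson_set_Icc 0 ε
    simpa using this
  by_cases hv : v = 0
  · subst hv
    rw [gaussianReal_zero_var]
    calc Measure.dirac 0 {x : ℝ | |x + s| ≤ ε}
        ≤ Measure.dirac 0 Set.univ := measure_mono (Set.subset_univ _)
      _ = 1 := measure_univ
      _ = Measure.dirac (0:ℝ) {x : ℝ | |x| ≤ ε} := by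
          rw [hset2, Measure.dirac_apply' _ measurableSet_Icc]
          simp [Set.indicator_of_mem, Set.mem_Icc, hε.le, neg_nonpos.mpr hε.le]
  · rw [hset1, hset2, gaussianReal_apply_eq_integral _ hv, gaussianReal_apply_eq_integral _ hv]
    apply ENNReal.ofReal_le_ofReal
    rw [integral_Icc_eq_integral_Ioc, integral_Icc_eq_integral_Ioc,
      ← intervalIntegral.integral_of_le (by linarith : -ε - s ≤ ε - s),
      ← intervalIntegral.integral_of_le (by linarith : -ε ≤ ε)]
    exact anderson_key v hε hs

lemma anderson_gmain' (v : NNReal) {ε : ℝ} (hε : 0 < ε) (r : ℝ) :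
    gaussianReal 0 v {x | |x + r| ≤ ε} ≤ gaussianReal 0 v {x | |x| ≤ ε} := by
  rcases le_total 0 r with hr | hr
  · exact anderson_gmain v hε hr
  · have hmap : (gaussianReal 0 v).map (fun x => (-1 : ℝ) * x) = gaussianReal 0 v := by
      rw [gaussianReal_map_const_mul]
      norm_num
    have hms : MeasurableSet {x : ℝ | |x + r| ≤ ε} := by
      rw [anderson_set_Icc]; exact measurableSet_Icc
    calc gaussianReal 0 v {x | |x + r| ≤ ε}
        = (gaussianReal 0 v).map (fun x => (-1 : ℝ) * x) {x | |x + r| ≤ ε} := by rw [hmap]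
      _ = gaussianReal 0 v ((fun x : ℝ => (-1 : ℝ) * x) ⁻¹' {x | |x + r| ≤ ε}) :=
          Measure.map_apply (measurable_id.const_mul _) hms
      _ = gaussianReal 0 v {x | |x + (-r)| ≤ ε} := by
          congr 1
          ext x
          simp only [Set.mem_preimage, Set.mem_setOf_eq, neg_one_mul]
          rw [show -x + r = -(x + -r) by ring, abs_neg]
      _ ≤ _ := anderson_gmain v hε (by linarith)

/-- One-dimensional Anderson inequality: for a centered Gaussian random variable `Y`,
any shift `r` and any `ε > 0`, `P(|Y + r| ≤ ε) ≤ P(|Y| ≤ ε)`. -/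
theorem stmt_0 {Ω : Type*} [MeasurableSpace Ω] (μ : Measure Ω) [IsProbabilityMeasure μ]
    (Y : Ω → ℝ) (v : NNReal) (hY : Measure.map Y μ = gaussianReal 0 v)
    (r : ℝ) (ε : ℝ) (hε : 0 < ε) :
    μ {ω | |Y ω + r| ≤ ε} ≤ μ {ω | |Y ω| ≤ ε} := by
  have hY' : AEMeasurable Y μ := by
    apply aemeasurable_of_map_neZero
    rw [hY]
    infer_instance
  have hms : ∀ t : ℝ, MeasurableSet {x : ℝ | |x + t| ≤ ε} := by
    intro t
    rw [anderson_set_Icc]; exact measurableSet_Icc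
  have h1 : μ {ω | |Y ω + r| ≤ ε} = gaussianReal 0 v {x | |x + r| ≤ ε} := by
    rw [← hY, Measure.map_apply_of_aemeasurable hY' (hms r)]
    rfl
  have h2 : μ {ω | |Y ω| ≤ ε} = gaussianReal 0 v {x | |x| ≤ ε} := by
    have : {x : ℝ | |x| ≤ ε} = {x : ℝ | |x + 0| ≤ ε} := by simp
    rw [← hY, this, Measure.map_apply_of_aemeasurable hY' (hms 0)]
    simp [Set.preimage]
  rw [h1, h2]
  exact anderson_gmain' v hε r
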